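/- (First Fundamental Theorem of Moser–Tardos theory.) Let Π = (V, Λ, C, dom, Bad) be a CSP whose dependency graph D_Π is locally finite, and let P be a probability measure on Λ making (Λ, P) a standard probability space with each Bad(c) measurable. Sample a random table t : V → Λ^ℕ from the product space (Λ^{V×ℕ}, P^{V×ℕ}). Then, for every witness digraph Γ with decoration δ, the probability that Γ is compatible with (Π, t) equals ∏_{x ∈ V(Γ)} P[Bad(δ(x))]. -/

import Mathlib

open MeasureTheory Set
open scoped ENNReal

/-- A constraint satisfaction problem (CSP): variables `V`, labels `Λ`, constraints `C`.
`dom c` is the finite set of variables of the constraint `c`, and `Bad c` is the set of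
bad labelings `φ : dom c → Λ`. -/
structure CSP (V : Type*) (Λ : Type*) (C : Type*) where
  dom : C → Set V
  dom_finite : ∀ c, (dom c).Finite
  Bad : (c : C) → Set (↥(dom c) → Λ)

namespace CSP

variable {V Λ C : Type*}

/-- A labeling `f : V → Λ` violates the constraint `c` if its restriction to `dom c`
is a bad labeling. -/
def violates (Φ : CSP V Λ C) (f : V → Λ) (c : C) : Prop :=
  (fun v : ↥(Φ.dom c) => f v) ∈ Φ.Bad c

/-- A solution of a CSP: a labeling satisfying every constraint. -/
def IsSolution (Φ : CSP V Λ C) (f : V → Λ) : Prop := ∀ c, ¬ Φ.violates f c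

/-- The dependency graph of a CSP: distinct constraints are adjacent iff their domains meet. -/
def depGraph (Φ : CSP V Λ C) : SimpleGraph C where
  Adj c c' := c ≠ c' ∧ (Φ.dom c ∩ Φ.dom c').Nonempty
  symm := ⟨by
    intro c c' h
    exact ⟨h.1.symm, by rw [Set.inter_comm]; exact h.2⟩⟩
  loopless := ⟨fun c h => h.1 rfl⟩

/-- `P[Bad(c)]`: the probability of the set of bad labelings of `c` with respect to the
product measure `P^{dom c}`. -/
noncomputable def badProb [MeasurableSpace Λ] (Φ : CSP V Λ C) (P : Measure Λ) (c : C) : ℝ≥0∞ :=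
  haveI := (Φ.dom_finite c).fintype
  Measure.pi (fun _ : ↥(Φ.dom c) => P) (Φ.Bad c)

end CSP

/-- The ball of radius `R` around `c`: vertices joined to `c` by a path of at most `R` edges. -/
def gball {C : Type*} (G : SimpleGraph C) (c : C) : ℕ → Set C
  | 0 => {c}
  | R + 1 => gball G c R ∪ ⋃ x ∈ gball G c R, G.neighborSet x

lemma gball_finite {C : Type*} (G : SimpleGraph C)
    (hlf : ∀ v, (G.neighborSet v).Finite) (c : C) : ∀ R, (gball G c R).Finite
  | 0 => Set.finite_singleton c
  | (R + 1) => ((gball_finite G hlf c R).union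
      ((gball_finite G hlf c R).biUnion (fun x _ => hlf x)))

/-- The growth function `γ_G(R) = sup_v |B_G(v,R)|`, valued in `ℕ∞`. -/
noncomputable def growth {C : Type*} (G : SimpleGraph C) (R : ℕ) : ℕ∞ :=
  ⨆ v, (gball G v R).encard

/-- The exponential growth rate `egr(G) = inf_{R ≥ 1} γ_G(R)^{1/R}`, valued in `ℝ≥0∞`. -/
noncomputable def egr {C : Type*} (G : SimpleGraph C) : ℝ≥0∞ :=
  ⨅ R : {n : ℕ // 1 ≤ n}, ((growth G R.1 : ℝ≥0∞) ^ ((R.1 : ℝ)⁻¹))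

/-- The closed neighborhood `N[c]` of a vertex in a graph. -/
def closedNbhd {C : Type*} (G : SimpleGraph C) (c : C) : Set C :=
  insert c (G.neighborSet c)

/-- A set of vertices is independent if no two of its members are adjacent. -/
def IsIndep {C : Type*} (G : SimpleGraph C) (s : Set C) : Prop :=
  ∀ c ∈ s, ∀ c' ∈ s, ¬ G.Adj c c'

section BorelCSP

variable {V Λ C : Type*}

/-- The finite set obtained as the image of a tuple. -/
noncomputable def finsetOfTuple {X : Type*} (n : ℕ) (t : Fin n → X) : Finset X :=
  haveI := Classical.decEq X
  Finset.image t Finset.univ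

/-- The standard Borel structure on the space of finite subsets of `X`: a set of finite sets is
measurable iff for each `n` its preimage under the map `(x_1, …, x_n) ↦ {x_1, …, x_n}` is
measurable. -/
noncomputable def finsetMS (X : Type*) [MeasurableSpace X] : MeasurableSpace (Finset X) :=
  ⨅ n : ℕ, MeasurableSpace.map (finsetOfTuple (X := X) n) MeasurableSpace.pi

/-- The graph of a labeling `φ : dom c → Λ`, as a finite subset of `V × Λ`; this encodes a finite
partial function `V ⇀ Λ`. -/
noncomputable def CSP.graphOf (Φ : CSP V Λ C) (c : C) (φ : ↥(Φ.dom c) → Λ) :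
    Finset (V × Λ) :=
  haveI := Classical.decEq (V × Λ)
  (Φ.dom_finite c).toFinset.attach.image
    (fun v => (v.1, φ ⟨v.1, (Φ.dom_finite c).mem_toFinset.mp v.2⟩))

/-- A CSP on standard Borel spaces is Borel if `dom` is a Borel map into the space of finite
subsets of `V` and `{(c, φ) : φ ∈ Bad c}` is Borel in `C × (finite partial functions V ⇀ Λ)`,
finite partial functions being encoded by their graphs. -/
structure IsBorelCSP [MeasurableSpace V] [MeasurableSpace Λ] [MeasurableSpace C]
    (Φ : CSP V Λ C) : Prop where
  dom_meas : Measurable[_, finsetMS V] (fun c => (Φ.dom_finite c).toFinset)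
  bad_meas : MeasurableSet[(inferInstance : MeasurableSpace C).prod (finsetMS (V × Λ))]
    {p : C × Finset (V × Λ) | ∃ φ ∈ Φ.Bad p.1, p.2 = Φ.graphOf p.1 φ}

end BorelCSP

section MT

variable {V Λ C : Type*}

open scoped Classical

/-- The level function of the Moser–Tardos algorithm run with the sequence `I` of chosen
independent sets: `lev_0(v) = 0` and `lev_{n+1}(v) = lev_n(v) + 1` exactly when `v` belongs to the
domain of some constraint in `I n`. -/
noncomputable def MTlev (Φ : CSP V Λ C) (I : ℕ → Set C) : ℕ → V → ℕ
  | 0, _ => 0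
  | n + 1, v => MTlev Φ I n v + (if ∃ c ∈ I n, v ∈ Φ.dom c then 1 else 0)

/-- The labeling used at step `n` of the Moser–Tardos algorithm with table `t`. -/
noncomputable def CSP.MTstep (Φ : CSP V Λ C) (t : V → ℕ → Λ) (I : ℕ → Set C)
    (n : ℕ) : V → Λ :=
  fun v => t v (MTlev Φ I n v)

/-- An MT-sequence `I` is consistent with `(Φ, t)` if it can be produced by the Moser–Tardos
algorithm on input `(Φ, t)`: each `I n` is an independent set of constraints violated by the
current labeling. -/
noncomputable def CSP.Consistent (Φ : CSP V Λ C) (t : V → ℕ → Λ) (I : ℕ → Set C) : Prop :=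
  (∀ n, IsIndep Φ.depGraph (I n)) ∧ ∀ n, ∀ c ∈ I n, Φ.violates (Φ.MTstep t I n) c

/-- An MT-sequence consistent with `(Φ, t)` that can be produced by the *maximal* Moser–Tardos
algorithm: each `I n` is a maximal independent subset of the set of violated constraints. -/
noncomputable def CSP.MaximalCons (Φ : CSP V Λ C) (t : V → ℕ → Λ) (I : ℕ → Set C) : Prop :=
  Φ.Consistent t I ∧
    ∀ n, ∀ c, Φ.violates (Φ.MTstep t I n) c → c ∉ I n → ∃ c' ∈ I n, Φ.depGraph.Adj c c'

/-- The levels at `v` stabilize, i.e. `lev(v) = lim_n lev_n(v) < ∞`: the output labeling of the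
run of the Moser–Tardos algorithm is defined at `v`. -/
def StabilizesAt (Φ : CSP V Λ C) (I : ℕ → Set C) (v : V) : Prop :=
  ∃ N, ∀ n, N ≤ n → MTlev Φ I n v = MTlev Φ I N v

/-- A table is good if every run of the Moser–Tardos algorithm on `(Φ, t)` produces a labeling
defined on all of `V`. -/
def CSP.GoodTable (Φ : CSP V Λ C) (t : V → ℕ → Λ) : Prop :=
  ∀ I : ℕ → Set C, Φ.Consistent t I → ∀ v, StabilizesAt Φ I v

/-- The `(c, r)`-local CSP `Π_{c,r}`: constraints at distance more than `r` from `c` in the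
dependency graph are always violated. -/
noncomputable def CSP.localCSP (Φ : CSP V Λ C) (c : C) (r : ℕ) : CSP V Λ C where
  dom := Φ.dom
  dom_finite := Φ.dom_finite
  Bad a := if a ∈ gball Φ.depGraph c r then Φ.Bad a else Set.univ

/-- A finite MT-sequence: `Σ_n |I_n| < ∞`. -/
def FiniteMTSeq {C : Type*} (I : ℕ → Set C) : Prop :=
  {q : C × ℕ | q.1 ∈ I q.2}.Finite

/-- A finite MT-sequence is `(c, r, N, ε)`-Følner if `Σ_n |I_n ∩ B_D(c,r)| ≥ N` and
`Σ_n |I_n \ B_D(c,r)| < ε · Σ_n |I_n|`. -/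
def CSP.Folner (Φ : CSP V Λ C) (I : ℕ → Set C) (c : C) (r N : ℕ) (ε : ℝ) : Prop :=
  FiniteMTSeq I ∧
    N ≤ {q : C × ℕ | q.1 ∈ I q.2 ∧ q.1 ∈ gball Φ.depGraph c r}.ncard ∧
    ({q : C × ℕ | q.1 ∈ I q.2 ∧ q.1 ∉ gball Φ.depGraph c r}.ncard : ℝ) <
      ε * ({q : C × ℕ | q.1 ∈ I q.2}.ncard : ℝ)

/-- A table is `(c, R, N, ε)`-locally good if for all `r < R` there is no `(c, r, N, ε)`-Følner
MT-sequence consistent with `(Φ_{c,r}, t)`. -/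
noncomputable def CSP.LocallyGoodAt (Φ : CSP V Λ C) (t : V → ℕ → Λ) (c : C) (R N : ℕ)
    (ε : ℝ) : Prop :=
  ∀ r < R, ¬ ∃ I : ℕ → Set C, (Φ.localCSP c r).Consistent t I ∧ Φ.Folner I c r N ε

/-- A table is `(R, N, ε)`-locally good if it is `(c, R, N, ε)`-locally good for every `c`. -/
noncomputable def CSP.LocallyGood (Φ : CSP V Λ C) (t : V → ℕ → Λ) (R N : ℕ) (ε : ℝ) : Prop :=
  ∀ c, Φ.LocallyGoodAt t c R N ε

/-- `dom_R(c) = ⋃_{a ∈ B_D(c,R)} dom(a)`. -/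
def CSP.domR (Φ : CSP V Λ C) (c : C) (R : ℕ) : Set V :=
  ⋃ a ∈ gball Φ.depGraph c R, Φ.dom a

lemma CSP.domR_finite (Φ : CSP V Λ C) (hlf : ∀ c, (Φ.depGraph.neighborSet c).Finite)
    (c : C) (R : ℕ) : (Φ.domR c R).Finite :=
  (gball_finite _ hlf c R).biUnion (fun a _ => Φ.dom_finite a)

/-- The set `LBad_{R,N,ε}(c)` of partial tables `φ : dom_R(c) → Λ^ℕ` such that some
(equivalently, every) table extending `φ` is not `(c, R, N, ε)`-locally good. -/
noncomputable def CSP.LBad (Φ : CSP V Λ C) (c : C) (R N : ℕ) (ε : ℝ) :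
    Set (↥(Φ.domR c R) → ℕ → Λ) :=
  {φ | ∃ t : V → ℕ → Λ, (∀ v : ↥(Φ.domR c R), t v = φ v) ∧
    ¬ Φ.LocallyGoodAt t c R N ε}

/-- The CSP `LG(R, N, ε)` whose solutions are exactly the `(R, N, ε)`-locally good tables. -/
noncomputable def CSP.LG (Φ : CSP V Λ C) (R N : ℕ) (ε : ℝ)
    (h : ∀ c, (Φ.domR c R).Finite) : CSP V (ℕ → Λ) C where
  dom c := Φ.domR c R
  dom_finite := h
  Bad c := Φ.LBad c R N ε

end MT

/-- `Q` is the product of copies of `P` over the index set `ι`: the measure of every measurable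
cylinder is the corresponding finite product. -/
def IsProductOf {ι Λ : Type*} [MeasurableSpace Λ] (Q : Measure (ι → Λ)) (P : Measure Λ) : Prop :=
  ∀ (s : Finset ι) (A : ι → Set Λ), (∀ i ∈ s, MeasurableSet (A i)) →
    Q {g | ∀ i ∈ s, g i ∈ A i} = ∏ i ∈ s, P (A i)

/-- A finite decorated digraph: a simple digraph on a finite vertex type `X` together with a
decoration `δ : X → C`. -/
structure DecoratedDigraph (C : Type*) where
  X : Type
  fin : Fintype X
  E : X → X → Prop
  dec : X → C

attribute [instance] DecoratedDigraph.fin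

namespace DecoratedDigraph

/-- A digraph is acyclic if it has no directed cycles. -/
def Acyclic {C : Type*} (Γ : DecoratedDigraph C) : Prop :=
  ∀ (k : ℕ) (f : ℕ → Γ.X), 0 < k → (∀ i < k, Γ.E (f i) (f (i + 1))) → f 0 ≠ f k

/-- Isomorphism of decorated digraphs (preserving the decoration). -/
def Iso {C : Type*} (Γ Γ' : DecoratedDigraph C) : Prop :=
  ∃ e : Γ.X ≃ Γ'.X, (∀ x y, Γ.E x y ↔ Γ'.E (e x) (e y)) ∧ ∀ x, Γ'.dec (e x) = Γ.dec x

end DecoratedDigraph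

/-- A witness digraph: a finite decorated digraph with no directed cycles such that
`E x y ∨ E y x` holds iff `x ≠ y` and `δ(x) ∈ N[δ(y)]`. -/
def IsWitnessDigraph {V Λ C : Type*} (Φ : CSP V Λ C) (Γ : DecoratedDigraph C) : Prop :=
  Γ.Acyclic ∧
    ∀ x y : Γ.X, (Γ.E x y ∨ Γ.E y x) ↔ x ≠ y ∧ Γ.dec x ∈ closedNbhd Φ.depGraph (Γ.dec y)

/-- The full witness digraph `Γ(I)` of a finite MT-sequence `I`: vertices are pairs `(c, n)` with
`c ∈ I n`, with an edge from `(c, n)` to `(c', n')` iff `n < n'` and `c ∈ N[c']`, decorated by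
`δ(c, n) = c`. -/
noncomputable def fullWitness {V Λ : Type*} {C : Type} (Φ : CSP V Λ C) (I : ℕ → Set C)
    (hfin : {q : C × ℕ | q.1 ∈ I q.2}.Finite) : DecoratedDigraph C where
  X := {q : C × ℕ | q.1 ∈ I q.2}
  fin := hfin.fintype
  E x y := (x : C × ℕ).2 < (y : C × ℕ).2 ∧ (x : C × ℕ).1 ∈ closedNbhd Φ.depGraph (y : C × ℕ).1
  dec x := (x : C × ℕ).1

/-- A witness digraph is compatible with `(Φ, t)` if it is isomorphic to the full witness digraph
of some (finite) MT-sequence consistent with `(Φ, t)`. -/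
def CompatibleWith {V Λ : Type*} {C : Type} (Φ : CSP V Λ C) (t : V → ℕ → Λ)
    (Γ : DecoratedDigraph C) : Prop :=
  ∃ (I : ℕ → Set C) (hfin : {q : C × ℕ | q.1 ∈ I q.2}.Finite),
    Φ.Consistent t I ∧ Γ.Iso (fullWitness Φ I hfin)

/-- `Γ` has a unique sink, whose decoration is `c`. -/
def HasUniqueSinkAt {C : Type*} (Γ : DecoratedDigraph C) (c : C) : Prop :=
  ∃ σ : Γ.X, (∀ y, ¬ Γ.E σ y) ∧ Γ.dec σ = c ∧ ∀ y : Γ.X, (∀ z, ¬ Γ.E y z) → y = σ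

section FFTAux

variable {V Λ : Type*} {C : Type}

lemma exists_path {Γ : DecoratedDigraph C} {x y : Γ.X} (h : Relation.TransGen Γ.E x y) :
    ∃ (k : ℕ) (f : ℕ → Γ.X), 0 < k ∧ f 0 = x ∧ f k = y ∧ ∀ i < k, Γ.E (f i) (f (i + 1)) := by
  induction h with
  | @single b hb =>
      refine ⟨1, fun i => if i = 0 then x else b, one_pos, by simp, by simp, ?_⟩
      intro i hi
      interval_cases i
      simpa using hb
  | @tail b c hab hbc ih =>
      obtain ⟨k, f, hk, h0, hkk, hedge⟩ := ih
      refine ⟨k + 1, fun i => if i ≤ k then f i else c, Nat.succ_pos _, by simp [h0], by simp, ?_⟩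
      intro i hi
      rcases Nat.lt_or_ge i k with h | h
      · simp only [if_pos h.le, if_pos (Nat.succ_le_of_lt h)]
        exact hedge i h
      · have hik : i = k := le_antisymm (Nat.lt_succ_iff.mp hi) h
        subst hik
        simp only [if_pos le_rfl, if_neg (Nat.not_succ_le_self i)]
        rw [hkk]; exact hbc

lemma transGen_irrefl {Γ : DecoratedDigraph C} (h : Γ.Acyclic) (x : Γ.X) :
    ¬ Relation.TransGen Γ.E x x := by
  intro hT
  obtain ⟨k, f, hk, h0, hkk, he⟩ := exists_path hT
  exact h k f hk he (h0.trans hkk.symm)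

lemma acyc_asymm {Γ : DecoratedDigraph C} (h : Γ.Acyclic) {x y : Γ.X}
    (h1 : Γ.E x y) (h2 : Γ.E y x) : False :=
  transGen_irrefl h x ((Relation.TransGen.single h1).tail h2)

lemma mem_closedNbhd_of_dom {Φ : CSP V Λ C} {c c' : C} {v : V}
    (h1 : v ∈ Φ.dom c) (h2 : v ∈ Φ.dom c') : c ∈ closedNbhd Φ.depGraph c' := by
  by_cases h : c = c'
  · subst h; exact Set.mem_insert _ _
  · exact Set.mem_insert_of_mem _ ⟨Ne.symm h, ⟨v, h2, h1⟩⟩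

lemma edge_or {Φ : CSP V Λ C} {Γ : DecoratedDigraph C} (hΓ : IsWitnessDigraph Φ Γ)
    {x y : Γ.X} (hne : x ≠ y) {v : V}
    (h1 : v ∈ Φ.dom (Γ.dec x)) (h2 : v ∈ Φ.dom (Γ.dec y)) : Γ.E x y ∨ Γ.E y x :=
  (hΓ.2 x y).mpr ⟨hne, mem_closedNbhd_of_dom h1 h2⟩

/-- The level a variable `v` has reached just before the resampling at vertex `x`. -/
noncomputable def wk (Φ : CSP V Λ C) (Γ : DecoratedDigraph C) (x : Γ.X) (v : V) : ℕ :=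
  {y : Γ.X | Γ.E y x ∧ v ∈ Φ.dom (Γ.dec y)}.ncard

end FFTAux
section FFTAux
open scoped Classical
variable {V Λ : Type*} {C : Type}

lemma mtlev_eq_ncard (Φ : CSP V Λ C) {I : ℕ → Set C}
    (hind : ∀ n, IsIndep Φ.depGraph (I n))
    (hfin : {q : C × ℕ | q.1 ∈ I q.2}.Finite) (n : ℕ) (v : V) :
    MTlev Φ I n v = {q : C × ℕ | q.1 ∈ I q.2 ∧ q.2 < n ∧ v ∈ Φ.dom q.1}.ncard := by
  induction n with
  | zero =>
      simp only [MTlev, Nat.not_lt_zero, false_and, and_false]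
      simp
  | succ n ih =>
      have hsplit : {q : C × ℕ | q.1 ∈ I q.2 ∧ q.2 < n + 1 ∧ v ∈ Φ.dom q.1} =
          {q : C × ℕ | q.1 ∈ I q.2 ∧ q.2 < n ∧ v ∈ Φ.dom q.1} ∪
          {q : C × ℕ | q.1 ∈ I q.2 ∧ q.2 = n ∧ v ∈ Φ.dom q.1} := by
        ext ⟨c, m⟩
        simp only [Set.mem_setOf_eq, Set.mem_union, Nat.lt_succ_iff_lt_or_eq]
        tauto
      have hdisj : Disjoint {q : C × ℕ | q.1 ∈ I q.2 ∧ q.2 < n ∧ v ∈ Φ.dom q.1}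
          {q : C × ℕ | q.1 ∈ I q.2 ∧ q.2 = n ∧ v ∈ Φ.dom q.1} := by
        rw [Set.disjoint_left]
        rintro ⟨c, m⟩ ⟨-, hm, -⟩ ⟨-, rfl, -⟩
        exact lt_irrefl _ hm
      have hf1 : {q : C × ℕ | q.1 ∈ I q.2 ∧ q.2 < n ∧ v ∈ Φ.dom q.1}.Finite :=
        hfin.subset (fun q hq => hq.1)
      have hf2 : {q : C × ℕ | q.1 ∈ I q.2 ∧ q.2 = n ∧ v ∈ Φ.dom q.1}.Finite :=
        hfin.subset (fun q hq => hq.1)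
      have hfiber : {q : C × ℕ | q.1 ∈ I q.2 ∧ q.2 = n ∧ v ∈ Φ.dom q.1}.ncard =
          if ∃ c ∈ I n, v ∈ Φ.dom c then 1 else 0 := by
        split_ifs with h
        · obtain ⟨c₀, hc₀, hv₀⟩ := h
          have : {q : C × ℕ | q.1 ∈ I q.2 ∧ q.2 = n ∧ v ∈ Φ.dom q.1} = {(c₀, n)} := by
            ext ⟨c, m⟩
            simp only [Set.mem_setOf_eq, Set.mem_singleton_iff, Prod.mk.injEq]
            constructor
            · rintro ⟨hc, rfl, hv⟩
              refine ⟨?_, rfl⟩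
              by_contra hne
              exact hind m c hc c₀ hc₀ ⟨hne, ⟨v, hv, hv₀⟩⟩
            · rintro ⟨rfl, rfl⟩
              exact ⟨hc₀, rfl, hv₀⟩
          rw [this, Set.ncard_singleton]
        · have : {q : C × ℕ | q.1 ∈ I q.2 ∧ q.2 = n ∧ v ∈ Φ.dom q.1} = ∅ := by
            ext ⟨c, m⟩
            simp only [Set.mem_setOf_eq, Set.mem_empty_iff_false, iff_false, not_and]
            rintro hc rfl hv
            exact h ⟨c, hc, hv⟩
          rw [this, Set.ncard_empty]
      show MTlev Φ I n v + _ = _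
      rw [hsplit, Set.ncard_union_eq hdisj hf1 hf2, ih, hfiber]

end FFTAux
section FFTAux
open scoped Classical
variable {V Λ : Type*} {C : Type}

lemma compatible_forward (Φ : CSP V Λ C) {Γ : DecoratedDigraph C}
    (hΓ : IsWitnessDigraph Φ Γ) (s : V → ℕ → Λ) (h : CompatibleWith Φ s Γ) (x : Γ.X) :
    (fun v : ↥(Φ.dom (Γ.dec x)) => s v.1 (wk Φ Γ x v.1)) ∈ Φ.Bad (Γ.dec x) := by
  obtain ⟨I, hfin, ⟨hind, hviol⟩, e, he, hd⟩ := h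
  let e' : Γ.X ≃ ↥{q : C × ℕ | q.1 ∈ I q.2} := e
  have he' : ∀ a b : Γ.X, Γ.E a b ↔
      ((e' a : C × ℕ).2 < (e' b : C × ℕ).2 ∧
        (e' a : C × ℕ).1 ∈ closedNbhd Φ.depGraph (e' b : C × ℕ).1) := he
  have hd' : ∀ a : Γ.X, (e' a : C × ℕ).1 = Γ.dec a := hd
  set c : C := (e' x : C × ℕ).1 with hc
  set n : ℕ := (e' x : C × ℕ).2 with hn
  have hdec : Γ.dec x = c := (hd' x).symm
  have hmem : c ∈ I n := (e' x).2
  have hlev : ∀ v ∈ Φ.dom c, MTlev Φ I n v = wk Φ Γ x v := by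
    intro v hvc
    have himg : {q : C × ℕ | q.1 ∈ I q.2 ∧ q.2 < n ∧ v ∈ Φ.dom q.1} =
        (fun y : Γ.X => (e' y : C × ℕ)) ''
          {y : Γ.X | Γ.E y x ∧ v ∈ Φ.dom (Γ.dec y)} := by
      ext q
      constructor
      · rintro ⟨hq1, hq2, hq3⟩
        refine ⟨e'.symm ⟨q, hq1⟩, ⟨?_, ?_⟩, congrArg Subtype.val (e'.apply_symm_apply ⟨q, hq1⟩)⟩
        · rw [he']
          simp only [Equiv.apply_symm_apply]
          exact ⟨hq2, mem_closedNbhd_of_dom hq3 hvc⟩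
        · have := hd' (e'.symm ⟨q, hq1⟩)
          simp only [Equiv.apply_symm_apply] at this
          rw [← this]
          exact hq3
      · rintro ⟨y, ⟨hE, hv'⟩, rfl⟩
        have hedge := (he' y x).mp hE
        refine ⟨(e' y).2, hedge.1, ?_⟩
        rw [hd' y]
        exact hv'
    have hinj : Function.Injective (fun y : Γ.X => (e' y : C × ℕ)) :=
      fun a b hab => e'.injective (Subtype.ext hab)
    rw [mtlev_eq_ncard Φ hind hfin, himg, Set.ncard_image_of_injective _ hinj, wk]
  have hv := hviol n c hmem
  rw [hdec]
  have heq : (fun v : ↥(Φ.dom c) => s v.1 (wk Φ Γ x v.1)) =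
      fun v : ↥(Φ.dom c) => (Φ.MTstep s I n) v.1 := by
    funext v
    show s v.1 (wk Φ Γ x v.1) = s v.1 (MTlev Φ I n v.1)
    rw [hlev v.1 v.2]
  rw [heq]
  exact hv
end FFTAux
section FFTAux
open scoped Classical
variable {V Λ : Type*} {C : Type}

lemma compatible_backward (Φ : CSP V Λ C) {Γ : DecoratedDigraph C}
    (hΓ : IsWitnessDigraph Φ Γ) (s : V → ℕ → Λ)
    (h : ∀ x : Γ.X, (fun v : ↥(Φ.dom (Γ.dec x)) => s v.1 (wk Φ Γ x v.1)) ∈ Φ.Bad (Γ.dec x)) :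
    CompatibleWith Φ s Γ := by
  classical
  -- a rank function strictly monotone along edges
  have hirr := transGen_irrefl hΓ.1
  set m := Fintype.card Γ.X with hm
  set ι₀ := Fintype.equivFin Γ.X with hι₀
  set ρ : Γ.X → ℕ := fun x => {y | Relation.TransGen Γ.E y x}.ncard with hρdef
  have hρ : ∀ {x y : Γ.X}, Relation.TransGen Γ.E x y → ρ x < ρ y := by
    intro x y hxy
    apply Set.ncard_lt_ncard _ (Set.toFinite _)
    constructor
    · exact fun z hz => Relation.TransGen.trans hz hxy
    · intro hsub
      exact hirr x (hsub hxy)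
  set f : Γ.X → ℕ := fun x => m * ρ x + (ι₀ x : ℕ) with hfdef
  have hf_inj : Function.Injective f := by
    intro a b hab
    have hmpos : 0 < m := Fintype.card_pos_iff.mpr ⟨a⟩
    have hρab : ρ a = ρ b := by
      have ha := Nat.mul_add_div hmpos (ρ a) (ι₀ a : ℕ)
      have hb := Nat.mul_add_div hmpos (ρ b) (ι₀ b : ℕ)
      rw [Nat.div_eq_of_lt (ι₀ a).2] at ha
      rw [Nat.div_eq_of_lt (ι₀ b).2] at hb
      have : f a / m = f b / m := by rw [hab]
      simpa [hfdef, ha, hb] using this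
    have hι : (ι₀ a : ℕ) = (ι₀ b : ℕ) := by
      have := hab
      simp only [hfdef, hρab] at this
      omega
    exact ι₀.injective (Fin.ext hι)
  have hf_mono : ∀ {x y : Γ.X}, Γ.E x y → f x < f y := by
    intro x y hxy
    have hρxy := hρ (Relation.TransGen.single hxy)
    have hx := (ι₀ x).2
    have h1 : f x < m * (ρ x + 1) := by
      show m * ρ x + (ι₀ x : ℕ) < m * (ρ x + 1)
      rw [Nat.mul_succ]
      omega
    have h2 : m * (ρ x + 1) ≤ m * ρ y := Nat.mul_le_mul_left m hρxy
    have h3 : m * ρ y ≤ f y := Nat.le_add_right _ _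
    omega
  -- a linear-order enumeration of the vertices refining f
  have hcard : (Finset.univ.image f).card = m := by
    rw [Finset.card_image_of_injective _ hf_inj, Finset.card_univ]
  set σ₁ := (Finset.univ.image f).orderIsoOfFin hcard with hσ₁
  have hψ : Function.Bijective
      (fun x : Γ.X => (⟨f x, Finset.mem_image_of_mem f (Finset.mem_univ x)⟩ :
        {a // a ∈ Finset.univ.image f})) := by
    constructor
    · intro a b hab
      exact hf_inj (congrArg Subtype.val hab)
    · rintro ⟨a, ha⟩
      obtain ⟨x, -, rfl⟩ := Finset.mem_image.mp ha
      exact ⟨x, rfl⟩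
  set ψ := Equiv.ofBijective _ hψ with hψdef
  set σ : Fin m ≃ Γ.X := σ₁.toEquiv.trans ψ.symm with hσdef
  have hfσ : ∀ i : Fin m, f (σ i) = (σ₁ i : ℕ) := by
    intro i
    have : ψ (σ i) = σ₁ i := by
      simp [hσdef]
    exact congrArg Subtype.val this
  have hmono : ∀ i j : Fin m, i < j ↔ f (σ i) < f (σ j) := by
    intro i j
    rw [hfσ, hfσ]
    exact Iff.trans (σ₁.lt_iff_lt).symm Iff.rfl
  have hEσ : ∀ {x y : Γ.X}, Γ.E x y → σ.symm x < σ.symm y := by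
    intro x y hxy
    rw [hmono, σ.apply_symm_apply, σ.apply_symm_apply]
    exact hf_mono hxy
  -- the MT-sequence
  set Iseq : ℕ → Set C := fun n => {c | ∃ hn : n < m, c = Γ.dec (σ ⟨n, hn⟩)} with hIseq
  have hfin : {q : C × ℕ | q.1 ∈ Iseq q.2}.Finite := by
    apply (Set.finite_range (fun i : Fin m => (Γ.dec (σ i), (i : ℕ)))).subset
    rintro ⟨c, n⟩ ⟨hn0, hc0⟩
    have hn : n < m := hn0
    have hc' : c = Γ.dec (σ ⟨n, hn⟩) := hc0
    subst hc'
    exact ⟨⟨n, hn⟩, rfl⟩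
  have hind : ∀ n, IsIndep Φ.depGraph (Iseq n) := by
    rintro n c ⟨hn, rfl⟩ c' ⟨hn', rfl⟩ hadj
    exact hadj.1 rfl
  -- level computation
  have hlev : ∀ (x : Γ.X), ∀ v ∈ Φ.dom (Γ.dec x),
      MTlev Φ Iseq ((σ.symm x : ℕ)) v = wk Φ Γ x v := by
    intro x v hv
    have himg : {q : C × ℕ | q.1 ∈ Iseq q.2 ∧ q.2 < (σ.symm x : ℕ) ∧ v ∈ Φ.dom q.1} =
        (fun y : Γ.X => (Γ.dec y, (σ.symm y : ℕ))) ''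
          {y : Γ.X | Γ.E y x ∧ v ∈ Φ.dom (Γ.dec y)} := by
      ext ⟨c, n⟩
      constructor
      · rintro ⟨⟨hn0, hc0⟩, hlt, hvq⟩
        have hn : n < m := hn0
        have hc' : c = Γ.dec (σ ⟨n, hn⟩) := hc0
        subst hc'
        have hlt' : n < (σ.symm x : ℕ) := hlt
        have hvq' : v ∈ Φ.dom (Γ.dec (σ ⟨n, hn⟩)) := hvq
        refine ⟨σ ⟨n, hn⟩, ⟨?_, hvq'⟩, ?_⟩
        · have hne : σ ⟨n, hn⟩ ≠ x := by
            intro hcontra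
            have hcc := congrArg (fun z => ((σ.symm z : Fin m) : ℕ)) hcontra
            simp only [Equiv.symm_apply_apply] at hcc
            omega
          rcases edge_or hΓ hne hvq' hv with hE | hE
          · exact hE
          · exfalso
            have h2 : ((σ.symm x : Fin m) : ℕ) < ((σ.symm (σ ⟨n, hn⟩) : Fin m) : ℕ) := hEσ hE
            simp only [Equiv.symm_apply_apply] at h2
            omega
        · have hss : (σ.symm (σ ⟨n, hn⟩)) = ⟨n, hn⟩ := σ.symm_apply_apply _
          show (Γ.dec (σ ⟨n, hn⟩), ((σ.symm (σ ⟨n, hn⟩)) : ℕ)) = (Γ.dec (σ ⟨n, hn⟩), n)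
          rw [hss]
      · rintro ⟨y, ⟨hE, hvy⟩, heq⟩
        obtain ⟨h1, h2⟩ := Prod.mk.injEq .. ▸ heq
        have hsym := hEσ hE
        refine ⟨?_, ?_, ?_⟩
        · rw [← h1, ← h2]
          exact ⟨(σ.symm y).2, by rw [Fin.eta, σ.apply_symm_apply]⟩
        · rw [← h2]
          exact hsym
        · rw [← h1]; exact hvy
    have hinj : Function.Injective (fun y : Γ.X => (Γ.dec y, (σ.symm y : ℕ))) := by
      intro a b hab
      have := congrArg Prod.snd hab
      exact σ.symm.injective (Fin.ext this)
    rw [mtlev_eq_ncard Φ hind hfin, himg, Set.ncard_image_of_injective _ hinj, wk]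
  -- consistency
  have hcons : Φ.Consistent s Iseq := by
    refine ⟨hind, ?_⟩
    rintro n c ⟨hn, rfl⟩
    set x := σ ⟨n, hn⟩ with hx
    have hsx : (σ.symm x : ℕ) = n := by rw [hx, σ.symm_apply_apply]
    show (fun v : ↥(Φ.dom (Γ.dec x)) => (Φ.MTstep s Iseq n) v.1) ∈ Φ.Bad (Γ.dec x)
    have heq : (fun v : ↥(Φ.dom (Γ.dec x)) => (Φ.MTstep s Iseq n) v.1) =
        fun v : ↥(Φ.dom (Γ.dec x)) => s v.1 (wk Φ Γ x v.1) := by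
      funext v
      show s v.1 (MTlev Φ Iseq n v.1) = s v.1 (wk Φ Γ x v.1)
      rw [← hsx, hlev x v.1 v.2]
    rw [heq]
    exact h x
  -- the isomorphism
  refine ⟨Iseq, hfin, hcons, ?_⟩
  have hτbij : Function.Bijective (fun x : Γ.X =>
      (⟨(Γ.dec x, (σ.symm x : ℕ)), ⟨(σ.symm x).2, by rw [Fin.eta, σ.apply_symm_apply]⟩⟩ :
        ↥{q : C × ℕ | q.1 ∈ Iseq q.2})) := by
    constructor
    · intro a b hab
      have := congrArg (fun z : ↥{q : C × ℕ | q.1 ∈ Iseq q.2} => (z : C × ℕ).2) hab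
      exact σ.symm.injective (Fin.ext this)
    · rintro ⟨⟨c, n⟩, hmem⟩
      have hn : n < m := hmem.choose
      have hc' : c = Γ.dec (σ ⟨n, hn⟩) := hmem.choose_spec
      subst hc'
      refine ⟨σ ⟨n, hn⟩, ?_⟩
      apply Subtype.ext
      show (Γ.dec (σ ⟨n, hn⟩), (σ.symm (σ ⟨n, hn⟩) : ℕ)) = (Γ.dec (σ ⟨n, hn⟩), n)
      rw [σ.symm_apply_apply]
  refine ⟨Equiv.ofBijective _ hτbij, ?_, ?_⟩
  · intro x y
    show Γ.E x y ↔ ((σ.symm x : ℕ) < (σ.symm y : ℕ) ∧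
      Γ.dec x ∈ closedNbhd Φ.depGraph (Γ.dec y))
    constructor
    · intro hE
      exact ⟨hEσ hE, ((hΓ.2 x y).mp (Or.inl hE)).2⟩
    · rintro ⟨hlt, hmem⟩
      have hne : x ≠ y := by
        intro hcontra
        rw [hcontra] at hlt
        exact lt_irrefl _ hlt
      rcases (hΓ.2 x y).mpr ⟨hne, hmem⟩ with hE | hE
      · exact hE
      · exfalso
        have := hEσ hE
        have : (σ.symm y : ℕ) < (σ.symm x : ℕ) := this
        omega
  · intro x
    rfl
end FFTAux
section FFTAux
open MeasureTheory
variable {V Λ : Type*} {C : Type}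

lemma map_restrict_eq_pi [MeasurableSpace Λ] {ι : Type*} [Fintype ι]
    (P : Measure Λ) [IsProbabilityMeasure P]
    (Q : Measure ((V × ℕ) → Λ)) (hQ : IsProductOf Q P)
    (g : ι → V × ℕ) (hg : Function.Injective g) :
    Q.map (fun t (i : ι) => t (g i)) = Measure.pi (fun _ : ι => P) := by
  classical
  symm
  apply Measure.pi_eq
  intro s hs
  have hres : Measurable (fun t : (V × ℕ) → Λ => fun i : ι => t (g i)) :=
    measurable_pi_lambda _ (fun i => measurable_pi_apply (g i))
  rw [Measure.map_apply hres (MeasurableSet.univ_pi hs)]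
  set A : V × ℕ → Set Λ := fun p => if h : ∃ i, g i = p then s h.choose else Set.univ with hA
  have hAg : ∀ i : ι, A (g i) = s i := by
    intro i
    have h : ∃ j, g j = g i := ⟨i, rfl⟩
    rw [hA]
    simp only [dif_pos h]
    rw [hg h.choose_spec]
  have hset : (fun t : (V × ℕ) → Λ => fun i : ι => t (g i)) ⁻¹' Set.univ.pi s =
      {u : (V × ℕ) → Λ | ∀ p ∈ Finset.image g Finset.univ, u p ∈ A p} := by
    ext t
    simp only [Set.mem_preimage, Set.mem_univ_pi, Set.mem_setOf_eq, Finset.mem_image,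
      Finset.mem_univ, true_and]
    constructor
    · rintro ht p ⟨i, rfl⟩
      rw [hAg i]
      exact ht i
    · intro ht i
      rw [← hAg i]
      exact ht (g i) ⟨i, rfl⟩
  have hAmeas : ∀ p ∈ Finset.image g Finset.univ, MeasurableSet (A p) := by
    intro p hp
    obtain ⟨i, -, rfl⟩ := Finset.mem_image.mp hp
    rw [hAg i]
    exact hs i
  rw [hset, hQ (Finset.image g Finset.univ) A hAmeas,
    Finset.prod_image (fun i _ j _ hij => hg hij)]
  exact Finset.prod_congr rfl (fun i _ => by rw [hAg i])

lemma pi_map_uncurry [MeasurableSpace Λ] {X : Type*} [Fintype X]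
    {D : X → Type*} [∀ x, Fintype (D x)]
    (P : Measure Λ) [IsProbabilityMeasure P] :
    (Measure.pi (fun x : X => Measure.pi (fun _ : D x => P))).map
        (fun u (i : Σ x : X, D x) => u i.1 i.2) =
      Measure.pi (fun _ : Σ x : X, D x => P) := by
  classical
  symm
  apply Measure.pi_eq
  intro s hs
  have hU : Measurable (fun (u : ∀ x : X, D x → Λ) (i : Σ x : X, D x) => u i.1 i.2) :=
    measurable_pi_lambda _ (fun i => (measurable_pi_apply i.2).comp (measurable_pi_apply i.1))
  rw [Measure.map_apply hU (MeasurableSet.univ_pi hs)]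
  have hset : (fun (u : ∀ x : X, D x → Λ) (i : Σ x : X, D x) => u i.1 i.2) ⁻¹' Set.univ.pi s =
      Set.univ.pi (fun x => Set.univ.pi (fun v : D x => s ⟨x, v⟩)) := by
    ext u
    simp only [Set.mem_preimage, Set.mem_univ_pi, Sigma.forall]
  rw [hset, Measure.pi_pi]
  simp_rw [Measure.pi_pi]
  rw [← Finset.univ_sigma_univ, Finset.prod_sigma]

end FFTAux
section FFTAux
open MeasureTheory
variable {V Λ : Type*} {C : Type}

lemma wk_lt_wk {Φ : CSP V Λ C} {Γ : DecoratedDigraph C} (hΓ : IsWitnessDigraph Φ Γ)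
    {x y : Γ.X} (hE : Γ.E y x) {v : V}
    (hvy : v ∈ Φ.dom (Γ.dec y)) (hvx : v ∈ Φ.dom (Γ.dec x)) :
    wk Φ Γ y v < wk Φ Γ x v := by
  have hsub : {z : Γ.X | Γ.E z y ∧ v ∈ Φ.dom (Γ.dec z)} ⊆
      {z : Γ.X | Γ.E z x ∧ v ∈ Φ.dom (Γ.dec z)} := by
    rintro z ⟨hzy, hvz⟩
    refine ⟨?_, hvz⟩
    by_cases hzx : z = x
    · subst hzx
      exact ((transGen_irrefl hΓ.1 z ((Relation.TransGen.single hzy).tail hE))).elim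
    · rcases edge_or hΓ hzx hvz hvx with hh | hh
      · exact hh
      · exact ((transGen_irrefl hΓ.1 x
          (((Relation.TransGen.single hh).tail hzy).tail hE))).elim
  have hss : {z : Γ.X | Γ.E z y ∧ v ∈ Φ.dom (Γ.dec z)} ⊂
      {z : Γ.X | Γ.E z x ∧ v ∈ Φ.dom (Γ.dec z)} :=
    (Set.ssubset_iff_of_subset hsub).mpr
      ⟨y, ⟨hE, hvy⟩, fun hy => transGen_irrefl hΓ.1 y (Relation.TransGen.single hy.1)⟩
  exact Set.ncard_lt_ncard hss (Set.toFinite _)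

end FFTAux

theorem first_fundamental_theorem'
    {V Λ : Type*} {C : Type} [MeasurableSpace Λ] [StandardBorelSpace Λ]
    (Φ : CSP V Λ C) (P : Measure Λ) [IsProbabilityMeasure P]
    (hlf : ∀ c, (Φ.depGraph.neighborSet c).Finite)
    (hmeas : ∀ c, MeasurableSet (Φ.Bad c))
    (Q : Measure ((V × ℕ) → Λ)) (hQ : IsProductOf Q P)
    (Γ : DecoratedDigraph C) (hΓ : IsWitnessDigraph Φ Γ) :
    Q {t : (V × ℕ) → Λ | CompatibleWith Φ (fun v n => t (v, n)) Γ} =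
      ∏ x : Γ.X, Φ.badProb P (Γ.dec x) := by
  classical
  letI instD : ∀ x : Γ.X, Fintype ↥(Φ.dom (Γ.dec x)) :=
    fun x => (Φ.dom_finite (Γ.dec x)).fintype
  set g : (Σ x : Γ.X, ↥(Φ.dom (Γ.dec x))) → V × ℕ :=
    fun p => (p.2.1, wk Φ Γ p.1 p.2.1) with hgdef
  have hg : Function.Injective g := by
    rintro ⟨x, v⟩ ⟨y, w⟩ hxy
    have h1 : v.1 = w.1 := congrArg Prod.fst hxy
    have h2 : wk Φ Γ x v.1 = wk Φ Γ y w.1 := congrArg Prod.snd hxy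
    have hxeqy : x = y := by
      by_contra hne
      have hvy : v.1 ∈ Φ.dom (Γ.dec y) := h1 ▸ w.2
      rcases edge_or hΓ hne v.2 hvy with hE | hE
      · have := wk_lt_wk hΓ hE v.2 hvy
        rw [← h1] at h2
        omega
      · have := wk_lt_wk hΓ hE hvy v.2
        rw [← h1] at h2
        omega
    subst hxeqy
    have : v = w := Subtype.ext h1
    subst this
    rfl
  have hevent : {t : (V × ℕ) → Λ | CompatibleWith Φ (fun v n => t (v, n)) Γ} =
      (fun t : (V × ℕ) → Λ => fun i : Σ x : Γ.X, ↥(Φ.dom (Γ.dec x)) => t (g i)) ⁻¹'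
        ((fun (u : (Σ x : Γ.X, ↥(Φ.dom (Γ.dec x))) → Λ)
            (x : Γ.X) (v : ↥(Φ.dom (Γ.dec x))) => u ⟨x, v⟩) ⁻¹'
          Set.univ.pi (fun x : Γ.X => Φ.Bad (Γ.dec x))) := by
    ext t
    simp only [Set.mem_setOf_eq, Set.mem_preimage, Set.mem_univ_pi]
    constructor
    · intro hc x
      exact compatible_forward Φ hΓ (fun v n => t (v, n)) hc x
    · intro hx
      exact compatible_backward Φ hΓ (fun v n => t (v, n)) hx
  have hres : Measurable (fun t : (V × ℕ) → Λ =>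
      fun i : Σ x : Γ.X, ↥(Φ.dom (Γ.dec x)) => t (g i)) :=
    measurable_pi_lambda _ (fun i => measurable_pi_apply (g i))
  have hU : Measurable (fun (u : (Σ x : Γ.X, ↥(Φ.dom (Γ.dec x))) → Λ)
      (x : Γ.X) (v : ↥(Φ.dom (Γ.dec x))) => u ⟨x, v⟩) :=
    measurable_pi_lambda _ (fun x => measurable_pi_lambda _ (fun v => measurable_pi_apply _))
  have hBad : MeasurableSet (Set.univ.pi (fun x : Γ.X => Φ.Bad (Γ.dec x))) :=
    MeasurableSet.univ_pi (fun x => hmeas _)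
  rw [hevent, ← Measure.map_apply hres (hU hBad),
    map_restrict_eq_pi P Q hQ g hg, ← pi_map_uncurry P,
    Measure.map_apply (measurable_pi_lambda _
      (fun i => (measurable_pi_apply i.2).comp (measurable_pi_apply i.1))) (hU hBad)]
  have hid : (fun (u : ∀ x : Γ.X, ↥(Φ.dom (Γ.dec x)) → Λ)
        (i : Σ x : Γ.X, ↥(Φ.dom (Γ.dec x))) => u i.1 i.2) ⁻¹'
      ((fun (u : (Σ x : Γ.X, ↥(Φ.dom (Γ.dec x))) → Λ)
          (x : Γ.X) (v : ↥(Φ.dom (Γ.dec x))) => u ⟨x, v⟩) ⁻¹'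
        Set.univ.pi (fun x : Γ.X => Φ.Bad (Γ.dec x))) =
      Set.univ.pi (fun x : Γ.X => Φ.Bad (Γ.dec x)) := by
    ext u
    simp only [Set.mem_preimage]
  rw [hid, Measure.pi_pi]
  rfl
/-- **First Fundamental Theorem of Moser–Tardos theory.** For a random table `t` sampled from the
product space `(Λ^{V×ℕ}, P^{V×ℕ})` and any witness digraph `Γ`, the probability that `Γ` is
compatible with `(Φ, t)` equals `∏_{x ∈ V(Γ)} P[Bad(δ(x))]`. -/
theorem first_fundamental_theorem
    {V Λ : Type*} {C : Type} [MeasurableSpace Λ] [StandardBorelSpace Λ]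
    (Φ : CSP V Λ C) (P : Measure Λ) [IsProbabilityMeasure P]
    (hlf : ∀ c, (Φ.depGraph.neighborSet c).Finite)
    (hmeas : ∀ c, MeasurableSet (Φ.Bad c))
    (Q : Measure ((V × ℕ) → Λ)) (hQ : IsProductOf Q P)
    (Γ : DecoratedDigraph C) (hΓ : IsWitnessDigraph Φ Γ) :
    Q {t : (V × ℕ) → Λ | CompatibleWith Φ (fun v n => t (v, n)) Γ} =
      ∏ x : Γ.X, Φ.badProb P (Γ.dec x) := by
  exact first_fundamental_theorem' Φ P hlf hmeas Q hQ Γ hΓ
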